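/- arXiv:1303.6349 — 2 statements merged into one kernel-verified Lean document; each statement's English description precedes it below -/
import Mathlib

section
/- Let $(X_t)_{t\in\mathbb{Z}}$ be a stationary max-stable process with representation $X_t = \int_E^\vee f_t\,dM^\alpha_\nu$, $f_t \ge 0$, $f_t \in L^\alpha(\nu)$. Then for $a, b > 0$ and sets $A = (a,\infty)$, $B = (b,\infty)$, the extremogram exists and equals $\gamma_{AB}(h) = \frac{\int_E f_0^\alpha(y) \wedge (\frac{a}{b} f_h(y))^\alpha\,\nu(dy)}{a^\alpha \int_E f_0^\alpha(y)\,\nu(dy)}$, where the extremogram is $\gamma_{AB}(h) = \lim_{n\to\infty} n P(a_n^{-1}X_0 \in A, a_n^{-1}X_h \in B)$ with $a_n = n^{1/\alpha}(\int_E f_0^\alpha d\nu)^{1/\alpha}$. -/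
open Filter Topology MeasureTheory

lemma mxex_key (c : ℝ) :
    Tendsto (fun n : ℕ => (n:ℝ) * (1 - Real.exp (-(c * (n:ℝ)⁻¹)))) atTop (𝓝 c) := by
  have hderiv : HasDerivAt (fun x : ℝ => 1 - Real.exp (-(c * x))) c 0 := by
    have h1 : HasDerivAt (fun x : ℝ => -(c * x)) (-c) 0 := by
      have h := ((hasDerivAt_id (0:ℝ)).const_mul c).neg
      rw [mul_one] at h
      exact h
    have h2 := (Real.hasDerivAt_exp (-(c*0))).comp 0 h1
    have h3 := (hasDerivAt_const (0:ℝ) (1:ℝ)).sub h2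
    simp only [mul_zero, neg_zero, Real.exp_zero, one_mul, zero_sub, neg_neg] at h3
    exact h3
  have hslope := hasDerivAt_iff_tendsto_slope.mp hderiv
  have htends : Tendsto (fun n : ℕ => ((n:ℝ))⁻¹) atTop (𝓝[≠] (0:ℝ)) := by
    apply tendsto_nhdsWithin_of_tendsto_nhds_of_eventually_within
    · exact tendsto_inv_atTop_nhds_zero_nat
    · filter_upwards [eventually_gt_atTop 0] with n hn
      have : (0:ℝ) < (n:ℝ) := by exact_mod_cast hn
      simp [this.ne']
  refine (hslope.comp htends).congr' ?_
  filter_upwards [eventually_gt_atTop 0] with n hn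
  have hn0 : (0:ℝ) < (n:ℝ) := by exact_mod_cast hn
  simp only [Function.comp, slope_def_field]
  field_simp
  ring_nf
  rw [Real.exp_zero]
  ring

/-- Extremogram of a stationary max-stable process for sets `A = (a,∞)`, `B = (b,∞)`:
with `a_n = n^{1/α} (∫ f₀^α dν)^{1/α}`,
`γ_{AB}(h) = lim_n n P(X₀ > a_n a, X_h > a_n b)
           = ∫ f₀^α ∧ ((a/b) f_h)^α dν / (a^α ∫ f₀^α dν)`. -/
theorem maxstable_extremogram
    {Ω E : Type*} [MeasurableSpace Ω] [MeasurableSpace E]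
    (P : Measure Ω) [IsProbabilityMeasure P]
    (ν : Measure E) [SigmaFinite ν]
    (α : ℝ) (hα : 0 < α)
    (f0 fh : E → ℝ) (hf0m : Measurable f0) (hfhm : Measurable fh)
    (hf0 : ∀ y, 0 ≤ f0 y) (hfh : ∀ y, 0 ≤ fh y)
    (hint0 : Integrable (fun y => f0 y ^ α) ν)
    (hinth : Integrable (fun y => fh y ^ α) ν)
    -- stationarity
    (hstat : ∫ y, fh y ^ α ∂ν = ∫ y, f0 y ^ α ∂ν)
    (hpos : 0 < ∫ y, f0 y ^ α ∂ν)
    (X0 Xh : Ω → ℝ) (hX0 : Measurable X0) (hXh : Measurable Xh)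
    -- bivariate max-stable (Fréchet) distribution of `(X₀, X_h)`
    (hjoint : ∀ x0 x1 : ℝ, 0 < x0 → 0 < x1 →
      (P {ω | X0 ω ≤ x0 ∧ Xh ω ≤ x1}).toReal
        = Real.exp (-∫ y, max ((f0 y / x0) ^ α) ((fh y / x1) ^ α) ∂ν))
    (hmarg0 : ∀ x : ℝ, 0 < x →
      (P {ω | X0 ω ≤ x}).toReal = Real.exp (-(x ^ (-α)) * ∫ y, f0 y ^ α ∂ν))
    (hmargh : ∀ x : ℝ, 0 < x →
      (P {ω | Xh ω ≤ x}).toReal = Real.exp (-(x ^ (-α)) * ∫ y, fh y ^ α ∂ν))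
    (hjointint : ∀ x0 x1 : ℝ, 0 < x0 → 0 < x1 →
      Integrable (fun y => max ((f0 y / x0) ^ α) ((fh y / x1) ^ α)) ν)
    (a b : ℝ) (ha : 0 < a) (hb : 0 < b)
    (aseq : ℕ → ℝ)
    (haseq : ∀ n : ℕ, aseq n = (n : ℝ) ^ (1/α) * (∫ y, f0 y ^ α ∂ν) ^ (1/α)) :
    Tendsto (fun n : ℕ =>
        (n : ℝ) * (P {ω | X0 ω > aseq n * a ∧ Xh ω > aseq n * b}).toReal)
      atTop
      (𝓝 ((∫ y, min (f0 y ^ α) ((a / b * fh y) ^ α) ∂ν)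
        / (a ^ α * ∫ y, f0 y ^ α ∂ν))) := by
  set I : ℝ := ∫ y, f0 y ^ α ∂ν with hIdef
  set J : ℝ := ∫ y, max (f0 y ^ α / a ^ α) (fh y ^ α / b ^ α) ∂ν with hJdef
  have hαne : α ≠ 0 := hα.ne'
  have haα : (0:ℝ) < a ^ α := Real.rpow_pos_of_pos ha α
  have hbα : (0:ℝ) < b ^ α := Real.rpow_pos_of_pos hb α
  set c1 : ℝ := (a ^ α)⁻¹ with hc1
  set c2 : ℝ := (b ^ α)⁻¹ with hc2
  set c3 : ℝ := J / I with hc3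
  -- integrability of the max integrand (rescaled)
  have hJint : Integrable (fun y => max (f0 y ^ α / a ^ α) (fh y ^ α / b ^ α)) ν := by
    have := hjointint a b ha hb
    refine this.congr (Filter.Eventually.of_forall fun y => ?_)
    simp only [Real.div_rpow (hf0 y) ha.le, Real.div_rpow (hfh y) hb.le]
  -- limit value identification
  have hT : (∫ y, min (f0 y ^ α) ((a / b * fh y) ^ α) ∂ν) / (a ^ α * I)
      = c1 + c2 - c3 := by
    have hmin : ∀ y, min (f0 y ^ α) ((a / b * fh y) ^ α)
        = f0 y ^ α + (a ^ α / b ^ α) * fh y ^ α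
          - a ^ α * max (f0 y ^ α / a ^ α) (fh y ^ α / b ^ α) := by
      intro y
      have h1 : (a / b * fh y) ^ α = a ^ α / b ^ α * fh y ^ α := by
        rw [Real.mul_rpow (by positivity) (hfh y), Real.div_rpow ha.le hb.le]
      have h2 : a ^ α * max (f0 y ^ α / a ^ α) (fh y ^ α / b ^ α)
          = max (f0 y ^ α) (a ^ α / b ^ α * fh y ^ α) := by
        rw [mul_max_of_nonneg _ _ haα.le]
        congr 1
        · field_simp
        · ring
      rw [h1, h2]
      have := min_add_max (f0 y ^ α) (a ^ α / b ^ α * fh y ^ α)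
      linarith
    have hIeq : (∫ y, min (f0 y ^ α) ((a / b * fh y) ^ α) ∂ν)
        = I + (a ^ α / b ^ α) * I - a ^ α * J := by
      rw [show (fun y => min (f0 y ^ α) ((a / b * fh y) ^ α))
          = fun y => f0 y ^ α + (a ^ α / b ^ α) * fh y ^ α
            - a ^ α * max (f0 y ^ α / a ^ α) (fh y ^ α / b ^ α) from funext hmin]
      have i1 : Integrable (fun y => f0 y ^ α + a ^ α / b ^ α * fh y ^ α) ν :=
        hint0.add (hinth.const_mul _)
      have i2 : Integrable
          (fun y => a ^ α * max (f0 y ^ α / a ^ α) (fh y ^ α / b ^ α)) ν :=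
        hJint.const_mul _
      have i3 : Integrable (fun y => a ^ α / b ^ α * fh y ^ α) ν := hinth.const_mul _
      rw [integral_sub i1 i2, integral_add hint0 i3, integral_const_mul, integral_const_mul,
        hstat]
    rw [hIeq, hc1, hc2, hc3]
    field_simp
  rw [hT]
  -- convergence
  have hlim : Tendsto (fun n : ℕ =>
      (n:ℝ) * (1 - Real.exp (-(c1 * (n:ℝ)⁻¹)))
      + (n:ℝ) * (1 - Real.exp (-(c2 * (n:ℝ)⁻¹)))
      - (n:ℝ) * (1 - Real.exp (-(c3 * (n:ℝ)⁻¹)))) atTop (𝓝 (c1 + c2 - c3)) :=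
    ((mxex_key c1).add (mxex_key c2)).sub (mxex_key c3)
  refine hlim.congr' ?_
  filter_upwards [eventually_gt_atTop 0] with n hn
  have hn0 : (0:ℝ) < (n:ℝ) := by exact_mod_cast hn
  -- basic positivity
  have hseqpos : 0 < aseq n := by
    rw [haseq n]
    positivity
  have hseqα : aseq n ^ α = (n:ℝ) * I := by
    rw [haseq n, Real.mul_rpow (by positivity) (by positivity),
      ← Real.rpow_mul hn0.le, ← Real.rpow_mul hpos.le, one_div,
      inv_mul_cancel₀ hαne, Real.rpow_one, Real.rpow_one]
  set u : ℝ := aseq n * a with hu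
  set v : ℝ := aseq n * b with hv
  have hupos : 0 < u := by positivity
  have hvpos : 0 < v := by positivity
  have huα : u ^ α = (n:ℝ) * I * a ^ α := by
    rw [hu, Real.mul_rpow hseqpos.le ha.le, hseqα]
  have hvα : v ^ α = (n:ℝ) * I * b ^ α := by
    rw [hv, Real.mul_rpow hseqpos.le hb.le, hseqα]
  -- the three exponentials
  have he1 : (P {ω | X0 ω ≤ u}).toReal = Real.exp (-(c1 * (n:ℝ)⁻¹)) := by
    rw [hmarg0 u hupos, Real.rpow_neg hupos.le, huα]
    congr 1
    rw [hc1]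
    field_simp
  have he2 : (P {ω | Xh ω ≤ v}).toReal = Real.exp (-(c2 * (n:ℝ)⁻¹)) := by
    rw [hmargh v hvpos, Real.rpow_neg hvpos.le, hvα, hstat]
    congr 1
    rw [hc2]
    field_simp
  have he3 : (P {ω | X0 ω ≤ u ∧ Xh ω ≤ v}).toReal = Real.exp (-(c3 * (n:ℝ)⁻¹)) := by
    rw [hjoint u v hupos hvpos]
    congr 1
    have hint_eq : (∫ y, max ((f0 y / u) ^ α) ((fh y / v) ^ α) ∂ν)
        = ((n:ℝ) * I)⁻¹ * J := by
      rw [show (fun y => max ((f0 y / u) ^ α) ((fh y / v) ^ α))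
          = fun y => ((n:ℝ) * I)⁻¹ * max (f0 y ^ α / a ^ α) (fh y ^ α / b ^ α) from ?_,
        integral_const_mul]
      funext y
      rw [Real.div_rpow (hf0 y) hupos.le, Real.div_rpow (hfh y) hvpos.le, huα, hvα,
        mul_max_of_nonneg _ _ (by positivity)]
      congr 1 <;> (simp only [div_eq_mul_inv, mul_inv]; ring)
    rw [hint_eq, hc3, mul_inv, div_eq_mul_inv]
    ring
  -- measure arithmetic
  have hA : MeasurableSet {ω | X0 ω ≤ u} := hX0 measurableSet_Iic
  have hB : MeasurableSet {ω | Xh ω ≤ v} := hXh measurableSet_Iic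
  have hset : {ω | X0 ω > u ∧ Xh ω > v} = ({ω | X0 ω ≤ u} ∪ {ω | Xh ω ≤ v})ᶜ := by
    ext ω
    simp [Set.mem_union, not_or, not_le]
  have hcompl : (P {ω | X0 ω > u ∧ Xh ω > v}).toReal
      = 1 - (P ({ω | X0 ω ≤ u} ∪ {ω | Xh ω ≤ v})).toReal := by
    rw [hset, prob_compl_eq_one_sub (hA.union hB),
      ENNReal.toReal_sub_of_le prob_le_one ENNReal.one_ne_top, ENNReal.toReal_one]
  have hunion : (P ({ω | X0 ω ≤ u} ∪ {ω | Xh ω ≤ v})).toReal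
      = (P {ω | X0 ω ≤ u}).toReal + (P {ω | Xh ω ≤ v}).toReal
        - (P ({ω | X0 ω ≤ u} ∩ {ω | Xh ω ≤ v})).toReal := by
    have h := measure_union_add_inter {ω | X0 ω ≤ u} hB (μ := P)
    have h' := congrArg ENNReal.toReal h
    rw [ENNReal.toReal_add (measure_ne_top P _) (measure_ne_top P _),
      ENNReal.toReal_add (measure_ne_top P _) (measure_ne_top P _)] at h'
    linarith
  have hinter : ({ω | X0 ω ≤ u} ∩ {ω | Xh ω ≤ v}) = {ω | X0 ω ≤ u ∧ Xh ω ≤ v} := rfl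
  rw [hcompl, hunion, hinter, he1, he2, he3]
  ring
end

section
/- Let $X_t$ be Fréchet($\alpha=1$) distributed with joint survival structure of a stationary max-stable process, and set $a_m = m \int_E f_0\,d\nu$. Then the pre-asymptotic extremogram satisfies $\rho_{AA,m}(h) := \frac{P(\min(X_0,X_h) > a_m)}{P(X_0 > a_m)} = \rho(h) - m^{-1}c_h(1 + o(1))$ as $m \to \infty$ for some constant $c_h$, where $\rho(h) = \int_E f_0 \wedge f_h\,d\nu / \int_E f_0\,d\nu$. Consequently $\sqrt{n/m}\,|\rho_{AA,m}(h) - \rho(h)| \to 0$ if and only if $n^{1/3} = o(m)$ (taking $m = m_n$ with $m_n \to \infty$, $m_n/n \to 0$). -/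
open Filter Topology MeasureTheory

lemma exp_taylor2 : Tendsto (fun x : ℝ => (Real.exp x - 1 - x) / x ^ 2) (𝓝[≠] (0:ℝ))
    (𝓝 (1/2)) := by
  have h : Tendsto (fun x : ℝ => (Real.exp x - 1 - x) / x ^ 2 - 1/2) (𝓝[≠] (0:ℝ)) (𝓝 0) := by
    apply squeeze_zero_norm' (a := fun x : ℝ => |x| * (2/9))
    · filter_upwards [self_mem_nhdsWithin,
        inter_mem_nhdsWithin {0}ᶜ (Metric.closedBall_mem_nhds (0:ℝ) one_pos)] with x hx hx1
      have hx0 : x ≠ 0 := hx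
      have hxle : |x| ≤ 1 := by simpa [Real.norm_eq_abs] using hx1.2
      have hb := Real.exp_bound hxle (n := 3) (by norm_num)
      have hsum : ∑ m ∈ Finset.range 3, x ^ m / (m.factorial : ℝ) = 1 + x + x^2/2 := by
        simp [Finset.sum_range_succ, Nat.factorial]
      rw [hsum] at hb
      have hx2 : x ^ 2 ≠ 0 := pow_ne_zero 2 hx0
      have key : (Real.exp x - 1 - x) / x ^ 2 - 1/2 = (Real.exp x - (1 + x + x^2/2)) / x ^ 2 := by
        field_simp; ring
      rw [Real.norm_eq_abs, key, abs_div, abs_pow]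
      calc |Real.exp x - (1 + x + x^2/2)| / |x| ^ 2
          ≤ (|x| ^ 3 * ((3:ℕ).succ / ((3:ℕ).factorial * 3))) / |x| ^ 2 := by
            apply div_le_div_of_nonneg_right hb
            positivity
          _ = |x| * (2/9) := by
            have : |x| ≠ 0 := abs_ne_zero.2 hx0
            field_simp [Nat.factorial]
            norm_num [Nat.factorial, Nat.succ_eq_add_one]
    · have : Tendsto (fun x : ℝ => |x| * (2/9)) (𝓝 (0:ℝ)) (𝓝 (|0| * (2/9))) := by
        exact (continuous_abs.tendsto 0).mul tendsto_const_nhds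
      simpa using this.mono_left nhdsWithin_le_nhds
  have := h.add (tendsto_const_nhds (x := (1/2 : ℝ)))
  simpa using this

lemma neg_maps : Tendsto (fun u : ℝ => -u) (𝓝[≠] (0:ℝ)) (𝓝[≠] (0:ℝ)) := by
  apply tendsto_nhdsWithin_of_tendsto_nhds_of_eventually_within
  · simpa using (continuous_neg.tendsto (0:ℝ)).mono_left nhdsWithin_le_nhds
  · filter_upwards [self_mem_nhdsWithin] with x hx
    simpa using neg_ne_zero.2 hx

lemma h_lim : Tendsto (fun u : ℝ => (Real.exp (-u) - 1 + u) / u ^ 2) (𝓝[≠] (0:ℝ))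
    (𝓝 (1/2)) := by
  have := exp_taylor2.comp neg_maps
  refine this.congr (fun u => ?_)
  simp only [Function.comp]
  ring_nf

lemma exp1_lim : Tendsto (fun x : ℝ => (Real.exp x - 1) / x) (𝓝[≠] (0:ℝ)) (𝓝 1) := by
  have h2 := exp_taylor2.mul (tendsto_nhdsWithin_of_tendsto_nhds (tendsto_id (x := 𝓝 (0:ℝ))))
  have := h2.add (tendsto_const_nhds (x := (1:ℝ)))
  simp only [mul_zero, zero_add] at this
  refine Tendsto.congr' ?_ this
  filter_upwards [self_mem_nhdsWithin] with x hx
  have hx0 : x ≠ 0 := hx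
  field_simp
  simp only [id_eq]
  ring

lemma main_lim (r : ℝ) (hr : 0 < r) :
    Tendsto (fun u : ℝ =>
      ((1 - 2 * Real.exp (-u) + Real.exp (-(r * u))) / (1 - Real.exp (-u)) - (2 - r)) / u)
      (𝓝[>] (0:ℝ)) (𝓝 (r * (r - 1) / 2)) := by
  have hsub : 𝓝[>] (0:ℝ) ≤ 𝓝[≠] (0:ℝ) :=
    nhdsWithin_mono _ (fun x hx => ne_of_gt hx)
  -- map u ↦ r * u into 𝓝[≠]0
  have hmul : Tendsto (fun u : ℝ => r * u) (𝓝[>] (0:ℝ)) (𝓝[≠] (0:ℝ)) := by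
    apply tendsto_nhdsWithin_of_tendsto_nhds_of_eventually_within
    · have : Tendsto (fun u : ℝ => r * u) (𝓝 (0:ℝ)) (𝓝 (r * 0)) :=
        (continuous_const.mul continuous_id).tendsto 0
      simpa using this.mono_left nhdsWithin_le_nhds
    · filter_upwards [self_mem_nhdsWithin] with x hx
      exact (mul_pos hr hx).ne'
  -- the factor u / (1 - exp (-u)) → 1
  have hfac : Tendsto (fun u : ℝ => u / (1 - Real.exp (-u))) (𝓝[>] (0:ℝ)) (𝓝 1) := by
    have h1 : Tendsto (fun u : ℝ => (1 - Real.exp (-u)) / u) (𝓝[>] (0:ℝ)) (𝓝 1) := by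
      have := (exp1_lim.comp neg_maps).mono_left hsub
      refine this.congr' ?_
      filter_upwards [self_mem_nhdsWithin] with u hu
      have hu0 : u ≠ 0 := ne_of_gt hu
      simp only [Function.comp]
      rw [div_eq_div_iff (neg_ne_zero.2 hu0) hu0]
      ring
    have := h1.inv₀ one_ne_zero
    simp only [inv_one] at this
    refine this.congr' ?_
    filter_upwards [self_mem_nhdsWithin] with u hu
    rw [inv_div]
  -- the factor G(u)/u² → r(r-1)/2
  have hG : Tendsto (fun u : ℝ =>
      r ^ 2 * ((Real.exp (-(r * u)) - 1 + r * u) / (r * u) ^ 2)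
        - r * ((Real.exp (-u) - 1 + u) / u ^ 2)) (𝓝[>] (0:ℝ)) (𝓝 (r * (r - 1) / 2)) := by
    have h1 := (h_lim.comp hmul)
    have h2 := h_lim.mono_left hsub
    have := (tendsto_const_nhds (x := r^2)).mul h1 |>.sub ((tendsto_const_nhds (x := r)).mul h2)
    simp only [Function.comp] at this
    convert this using 2
    ring
  have := hG.mul hfac
  rw [mul_one] at this
  refine this.congr' ?_
  filter_upwards [self_mem_nhdsWithin] with u hu
  have hu' : (0:ℝ) < u := hu
  have hu0 : u ≠ 0 := ne_of_gt hu
  have hru : r * u ≠ 0 := (mul_pos hr hu).ne'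
  have hden : 1 - Real.exp (-u) ≠ 0 := by
    have : Real.exp (-u) < 1 := Real.exp_lt_one_iff.2 (by linarith)
    linarith
  field_simp
  ring

lemma sqrt_rpow_id (n m t : ℝ) (hn : 0 ≤ n) (hm : 1 ≤ m) :
    Real.sqrt (n / m) * t = (m * t) * ((n ^ ((1:ℝ)/3) / m) ^ ((3:ℝ)/2)) := by
  have hm0 : 0 < m := lt_of_lt_of_le one_pos hm
  have h1 : (n ^ ((1:ℝ)/3) / m) ^ ((3:ℝ)/2)
      = n ^ ((1:ℝ)/2) / m ^ ((3:ℝ)/2) := by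
    rw [Real.div_rpow (Real.rpow_nonneg hn _) hm0.le, ← Real.rpow_mul hn]
    norm_num
  have h2 : Real.sqrt (n / m) = n ^ ((1:ℝ)/2) / m ^ ((1:ℝ)/2) := by
    rw [Real.sqrt_eq_rpow, Real.div_rpow hn hm0.le]
  have h3 : m ^ ((3:ℝ)/2) = m * m ^ ((1:ℝ)/2) := by
    rw [show ((3:ℝ)/2) = 1 + 1/2 by norm_num, Real.rpow_add hm0, Real.rpow_one]
  have h4 : m ^ ((1:ℝ)/2) ≠ 0 := (Real.rpow_pos_of_pos hm0 _).ne'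
  rw [h1, h2, h3]
  field_simp

/-- Bias of the pre-asymptotic extremogram for a stationary max-stable process
with unit-Fréchet (`α = 1`) marginals and `a_m = m ∫ f₀ dν`: there is a constant
`c_h ≠ 0` with `m(ρ_{AA,m}(h) - ρ(h)) → -c_h` (i.e. `ρ_{AA,m}(h) = ρ(h) - m⁻¹c_h(1+o(1))`),
and consequently, for `m = m_n → ∞` with `m_n/n → 0`,
`√(n/m_n)|ρ_{AA,m_n}(h) - ρ(h)| → 0` iff `n^{1/3} = o(m_n)`. -/
theorem preasymptotic_extremogram_bias
    {Ω E : Type*} [MeasurableSpace Ω] [MeasurableSpace E]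
    (P : Measure Ω) [IsProbabilityMeasure P]
    (ν : Measure E) [SigmaFinite ν]
    (f0 fh : E → ℝ) (hf0m : Measurable f0) (hfhm : Measurable fh)
    (hf0 : ∀ y, 0 ≤ f0 y) (hfh : ∀ y, 0 ≤ fh y)
    (hint0 : Integrable f0 ν) (hinth : Integrable fh ν)
    (hintmax : Integrable (fun y => max (f0 y) (fh y)) ν)
    (hstat : ∫ y, fh y ∂ν = ∫ y, f0 y ∂ν)
    (hpos : 0 < ∫ y, f0 y ∂ν)
    -- nondegeneracy (this is the assumption `c_h ≠ 0`)
    (hnondeg : ∫ y, f0 y ∂ν < ∫ y, max (f0 y) (fh y) ∂ν)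
    (X0 Xh : Ω → ℝ) (hX0 : Measurable X0) (hXh : Measurable Xh)
    -- bivariate max-stable (unit Fréchet, `α = 1`) distribution of `(X₀, X_h)`
    (hjoint : ∀ x : ℝ, 0 < x →
      (P {ω | X0 ω ≤ x ∧ Xh ω ≤ x}).toReal
        = Real.exp (-(x⁻¹) * ∫ y, max (f0 y) (fh y) ∂ν))
    (hmarg0 : ∀ x : ℝ, 0 < x →
      (P {ω | X0 ω ≤ x}).toReal = Real.exp (-(x⁻¹) * ∫ y, f0 y ∂ν))
    (hmargh : ∀ x : ℝ, 0 < x →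
      (P {ω | Xh ω ≤ x}).toReal = Real.exp (-(x⁻¹) * ∫ y, fh y ∂ν))
    (aseq : ℕ → ℝ) (haseq : ∀ m : ℕ, aseq m = (m : ℝ) * ∫ y, f0 y ∂ν)
    (ρ : ℝ) (hρ : ρ = (∫ y, min (f0 y) (fh y) ∂ν) / ∫ y, f0 y ∂ν)
    -- the pre-asymptotic extremogram `ρ_{AA,m}(h) = P(min(X₀,X_h) > a_m)/P(X₀ > a_m)`
    (ρm : ℕ → ℝ)
    (hρm : ∀ m : ℕ, ρm m
      = (P {ω | X0 ω > aseq m ∧ Xh ω > aseq m}).toReal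
          / (P {ω | X0 ω > aseq m}).toReal) :
    ∃ c : ℝ, c ≠ 0 ∧
      Tendsto (fun m : ℕ => (m : ℝ) * (ρm m - ρ)) atTop (𝓝 (-c)) ∧
      ∀ mseq : ℕ → ℕ, Tendsto mseq atTop atTop →
        Tendsto (fun n : ℕ => (mseq n : ℝ) / n) atTop (𝓝 0) →
        (Tendsto (fun n : ℕ =>
            Real.sqrt ((n : ℝ) / mseq n) * |ρm (mseq n) - ρ|) atTop (𝓝 0)
          ↔ Tendsto (fun n : ℕ => (n : ℝ) ^ ((1:ℝ)/3) / mseq n) atTop (𝓝 0)) := by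
  set I0 : ℝ := ∫ y, f0 y ∂ν with hI0def
  set Im : ℝ := ∫ y, max (f0 y) (fh y) ∂ν with hImdef
  have hI0 : I0 ≠ 0 := hpos.ne'
  set r : ℝ := Im / I0 with hrdef
  have hr1 : 1 < r := (one_lt_div hpos).2 hnondeg
  have hr0 : 0 < r := lt_trans one_pos hr1
  -- ρ = 2 - r
  have hρ2 : ρ = 2 - r := by
    have hmin : (∫ y, min (f0 y) (fh y) ∂ν) = I0 + I0 - Im := by
      have hfun : (fun y => min (f0 y) (fh y))
          = fun y => f0 y + fh y - max (f0 y) (fh y) := by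
        funext y
        have := min_add_max (f0 y) (fh y)
        linarith
      have hsum : Integrable (fun y => f0 y + fh y) ν := hint0.add hinth
      rw [hfun, integral_sub hsum hintmax, integral_add hint0 hinth, hstat]
    rw [hρ, hmin, hrdef]
    field_simp
    ring
  -- explicit formula for ρm on m ≥ 1
  have hρm_eq : ∀ m : ℕ, 1 ≤ m →
      ρm m = (1 - 2 * Real.exp (-(1/(m:ℝ))) + Real.exp (-(r * (1/(m:ℝ)))))
        / (1 - Real.exp (-(1/(m:ℝ)))) := by
    intro m hm
    have hmR : (1:ℝ) ≤ (m:ℝ) := by exact_mod_cast hm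
    have hmpos : (0:ℝ) < (m:ℝ) := lt_of_lt_of_le one_pos hmR
    have ha : 0 < aseq m := by rw [haseq]; exact mul_pos hmpos hpos
    set a := aseq m with hadef
    have hexp0 : -(a⁻¹) * I0 = -(1/(m:ℝ)) := by
      rw [hadef, haseq]
      field_simp
    have hexpm : -(a⁻¹) * Im = -(r * (1/(m:ℝ))) := by
      rw [hadef, haseq, hrdef]
      field_simp
    set S : Set Ω := {ω | X0 ω ≤ a} with hSdef
    set T : Set Ω := {ω | Xh ω ≤ a} with hTdef
    have hSm : MeasurableSet S := measurableSet_le hX0 measurable_const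
    have hTm : MeasurableSet T := measurableSet_le hXh measurable_const
    have hPS : (P S).toReal = Real.exp (-(1/(m:ℝ))) := by
      rw [hSdef, hmarg0 a ha, hexp0]
    have hPT : (P T).toReal = Real.exp (-(1/(m:ℝ))) := by
      rw [hTdef, hmargh a ha, hstat, hexp0]
    have hPST : (P (S ∩ T)).toReal = Real.exp (-(r * (1/(m:ℝ)))) := by
      have : S ∩ T = {ω | X0 ω ≤ a ∧ Xh ω ≤ a} := by
        ext ω; simp [hSdef, hTdef, Set.mem_inter_iff]
      rw [this, hjoint a ha, hexpm]
    -- measure of union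
    have hunion : (P (S ∪ T)).toReal
        = (P S).toReal + (P T).toReal - (P (S ∩ T)).toReal := by
      have h1 := measure_union_add_inter (μ := P) S hTm
      have h2 : (P (S ∪ T)).toReal + (P (S ∩ T)).toReal
          = (P S).toReal + (P T).toReal := by
        rw [← ENNReal.toReal_add (measure_ne_top P _) (measure_ne_top P _),
          ← ENNReal.toReal_add (measure_ne_top P _) (measure_ne_top P _), h1]
      linarith
    -- complement helper
    have hcompl : ∀ (A : Set Ω), MeasurableSet A → (P Aᶜ).toReal = 1 - (P A).toReal := by
      intro A hA
      rw [measure_compl hA (measure_ne_top P A), measure_univ,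
        ENNReal.toReal_sub_of_le prob_le_one (by norm_num)]
      norm_num
    -- numerator
    have hnum : (P {ω | X0 ω > a ∧ Xh ω > a}).toReal
        = 1 - 2 * Real.exp (-(1/(m:ℝ))) + Real.exp (-(r * (1/(m:ℝ)))) := by
      have hset : {ω | X0 ω > a ∧ Xh ω > a} = (S ∪ T)ᶜ := by
        ext ω; simp [hSdef, hTdef, Set.mem_union, not_or, not_le]
      rw [hset, hcompl _ (hSm.union hTm), hunion, hPS, hPT, hPST]
      ring
    -- denominator
    have hden : (P {ω | X0 ω > a}).toReal = 1 - Real.exp (-(1/(m:ℝ))) := by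
      have hset : {ω | X0 ω > a} = Sᶜ := by
        ext ω; simp [hSdef, not_le]
      rw [hset, hcompl _ hSm, hPS]
    rw [hρm m, ← hadef, hnum, hden]
  -- the main limit
  set L : ℝ := r * (r - 1) / 2 with hLdef
  have hLpos : 0 < L := by
    apply div_pos (mul_pos hr0 (by linarith)) two_pos
  have hmain : Tendsto (fun m : ℕ => (m : ℝ) * (ρm m - ρ)) atTop (𝓝 L) := by
    have hseq : Tendsto (fun m : ℕ => 1/(m:ℝ)) atTop (𝓝[>] (0:ℝ)) := by
      apply tendsto_nhdsWithin_of_tendsto_nhds_of_eventually_within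
      · exact tendsto_one_div_atTop_nhds_zero_nat
      · filter_upwards [eventually_ge_atTop 1] with m hm
        have : (0:ℝ) < (m:ℝ) := by exact_mod_cast Nat.lt_of_lt_of_le Nat.zero_lt_one hm
        exact one_div_pos.2 this
    have hcomp := (main_lim r hr0).comp hseq
    rw [← hLdef] at hcomp
    refine hcomp.congr' ?_
    filter_upwards [eventually_ge_atTop 1] with m hm
    have hm0 : ((m:ℝ)) ≠ 0 := by
      have : (0:ℝ) < (m:ℝ) := by exact_mod_cast Nat.lt_of_lt_of_le Nat.zero_lt_one hm
      exact this.ne'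
    simp only [Function.comp]
    rw [hρm_eq m hm, hρ2, one_div, div_inv_eq_mul]
    ring
  refine ⟨-L, neg_ne_zero.2 hLpos.ne', by simpa using hmain, ?_⟩
  -- second part
  intro mseq hmseq _
  have hD : Tendsto (fun n : ℕ => |(mseq n : ℝ) * (ρm (mseq n) - ρ)|) atTop (𝓝 L) := by
    have := (hmain.comp hmseq).abs
    simpa [abs_of_pos hLpos] using this
  have hev1 : ∀ᶠ n : ℕ in atTop, 1 ≤ mseq n := hmseq.eventually_ge_atTop 1
  have hC_nonneg : ∀ n : ℕ, 0 ≤ (n:ℝ) ^ ((1:ℝ)/3) / (mseq n : ℝ) :=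
    fun n => div_nonneg (Real.rpow_nonneg (Nat.cast_nonneg n) _) (Nat.cast_nonneg _)
  -- eventual identity
  have hid : ∀ᶠ n : ℕ in atTop,
      Real.sqrt ((n : ℝ) / mseq n) * |ρm (mseq n) - ρ|
        = |(mseq n : ℝ) * (ρm (mseq n) - ρ)|
          * (((n:ℝ) ^ ((1:ℝ)/3) / mseq n) ^ ((3:ℝ)/2)) := by
    filter_upwards [hev1] with n hn
    have hmR : (1:ℝ) ≤ (mseq n : ℝ) := by exact_mod_cast hn
    rw [abs_mul, abs_of_nonneg (Nat.cast_nonneg (mseq n) : (0:ℝ) ≤ (mseq n:ℝ))]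
    exact sqrt_rpow_id _ _ _ (Nat.cast_nonneg n) hmR
  constructor
  · intro hA
    -- C^{3/2} → 0
    have hDpos : ∀ᶠ n : ℕ in atTop, L/2 < |(mseq n : ℝ) * (ρm (mseq n) - ρ)| :=
      hD.eventually (eventually_gt_nhds (by linarith))
    have h32 : Tendsto (fun n : ℕ =>
        (((n:ℝ) ^ ((1:ℝ)/3) / mseq n) ^ ((3:ℝ)/2))) atTop (𝓝 0) := by
      have hdiv := hA.div hD hLpos.ne'
      rw [zero_div] at hdiv
      refine hdiv.congr' ?_
      filter_upwards [hid, hDpos] with n hn hDn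
      have hne : |(mseq n : ℝ) * (ρm (mseq n) - ρ)| ≠ 0 := by
        have : (0:ℝ) < |(mseq n : ℝ) * (ρm (mseq n) - ρ)| := by linarith
        exact this.ne'
      simp only [Pi.div_apply]
      rw [hn, mul_comm, mul_div_assoc, div_self hne, mul_one]
    have := h32.rpow_const (p := (2:ℝ)/3) (Or.inr (by norm_num))
    rw [Real.zero_rpow (by norm_num)] at this
    refine this.congr (fun n => ?_)
    rw [← Real.rpow_mul (hC_nonneg n)]
    norm_num
  · intro hC
    have h32 := hC.rpow_const (p := (3:ℝ)/2) (Or.inr (by norm_num))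
    rw [Real.zero_rpow (by norm_num)] at h32
    have := hD.mul h32
    rw [mul_zero] at this
    exact this.congr' (by filter_upwards [hid] with n hn; rw [hn])
end
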